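/- Let λ > 0 and let f : (0,∞) → ℝ be a generalized Stieltjes function of order λ, say f(x) = C + ∫_{[0,∞)} (x+t)^{-λ} dρ(t) with C ≥ 0 and ρ a nonnegative Borel measure on [0,∞) whose integral converges for all x > 0. Then for all integers n, k ≥ 0 and all x > 0, F^{[λ]}_{n,k}(x) = (Γ(n+k+λ)/Γ(λ)) · [ C·δ_{n,0} + ∫_{[0,∞)} t^k/(x+t)^{n+k+λ} dρ(t) ], where δ_{n,0} equals 1 if n = 0 and 0 otherwise; in particular F^{[λ]}_{n,k}(x) ≥ 0. -/

import Mathlib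

open MeasureTheory Set Filter

/-- `F^{[λ]}_{n,k}(x) = (−1)^n Σ_{j=0}^{k} C(k,j) (Γ(n+k+λ)/Γ(n+j+λ)) x^j f^{(n+j)}(x)`. -/
noncomputable def Fgen (lam : ℝ) (f : ℝ → ℝ) (n k : ℕ) (x : ℝ) : ℝ :=
  (-1 : ℝ) ^ n * ∑ j ∈ Finset.range (k + 1),
    (k.choose j : ℝ) * (Real.Gamma ((n : ℝ) + k + lam) / Real.Gamma ((n : ℝ) + j + lam)) *
      x ^ j * iteratedDerivWithin (n + j) f (Set.Ioi 0) x

section aux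

variable {lam : ℝ} {ρ : Measure ℝ}

private lemma st_ae_nonneg (hsupp : ρ (Set.Iio 0) = 0) : ∀ᵐ t ∂ρ, (0:ℝ) ≤ t := by
  rw [ae_iff]
  convert hsupp using 2
  ext t
  simp [not_le]

private lemma st_meas {x : ℝ} (hx : 0 < x) (μ : ℝ) (hsupp : ρ (Set.Iio 0) = 0) :
    AEStronglyMeasurable (fun t : ℝ => (x + t) ^ (-μ)) ρ := by
  have hg : Continuous fun t : ℝ => (x + max t 0) ^ (-μ) := by
    apply Continuous.rpow_const (continuous_const.add (continuous_id.max continuous_const))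
    intro t
    left
    simp only [id_eq]
    have : (0:ℝ) ≤ max t 0 := le_max_right _ _
    exact ne_of_gt (by show 0 < x + max t 0; linarith)
  refine hg.aestronglyMeasurable.congr ?_
  filter_upwards [st_ae_nonneg hsupp] with t ht
  rw [max_eq_left ht]

private lemma st_int (hlam : 0 < lam) (hsupp : ρ (Set.Iio 0) = 0)
    (hint : ∀ x > (0:ℝ), Integrable (fun t => (x + t) ^ (-lam)) ρ)
    {μ : ℝ} (hμ : lam ≤ μ) {x : ℝ} (hx : 0 < x) :
    Integrable (fun t => (x + t) ^ (-μ)) ρ := by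
  refine Integrable.mono' ((hint x hx).const_mul (x ^ (lam - μ))) (st_meas hx μ hsupp) ?_
  filter_upwards [st_ae_nonneg hsupp] with t ht
  have hxt : 0 < x + t := by linarith
  rw [Real.norm_eq_abs, abs_of_nonneg (Real.rpow_nonneg hxt.le _)]
  have h1 : (x + t) ^ (-μ) = (x + t) ^ (lam - μ) * (x + t) ^ (-lam) := by
    rw [← Real.rpow_add hxt]; ring_nf
  rw [h1]
  have h2 : (x + t) ^ (lam - μ) ≤ x ^ (lam - μ) :=
    Real.rpow_le_rpow_of_nonpos hx (by linarith) (by linarith)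
  exact mul_le_mul_of_nonneg_right h2 (Real.rpow_nonneg hxt.le _)

private lemma st_deriv (hlam : 0 < lam) (hsupp : ρ (Set.Iio 0) = 0)
    (hint : ∀ x > (0:ℝ), Integrable (fun t => (x + t) ^ (-lam)) ρ)
    {μ : ℝ} (hμ : lam ≤ μ) {x : ℝ} (hx : 0 < x) :
    HasDerivAt (fun y => ∫ t, (y + t) ^ (-μ) ∂ρ)
      (-μ * ∫ t, (x + t) ^ (-(μ + 1)) ∂ρ) x := by
  have hμ0 : 0 < μ := lt_of_lt_of_le hlam hμ
  have hε : (0:ℝ) < x / 2 := by linarith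
  have key := hasDerivAt_integral_of_dominated_loc_of_deriv_le (μ := ρ) (x₀ := x)
      (F := fun y t => (y + t) ^ (-μ)) (F' := fun y t => -μ * (y + t) ^ (-(μ + 1)))
      (bound := fun t => μ * (x / 2 + t) ^ (-(μ + 1))) (Metric.ball_mem_nhds x hε)
      ?_ (st_int hlam hsupp hint hμ hx) ((st_meas hx (μ + 1) hsupp).const_mul (-μ))
      ?_ ((st_int hlam hsupp hint (by linarith : lam ≤ μ + 1) hε).const_mul μ) ?_
  · have := key.2
    rwa [integral_const_mul] at this
  · filter_upwards [eventually_gt_nhds hx] with y hy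
    exact st_meas hy μ hsupp
  · filter_upwards [st_ae_nonneg hsupp] with t ht y hy
    rw [Metric.mem_ball, Real.dist_eq, abs_lt] at hy
    have hyt : 0 < y + t := by linarith [hy.1]
    have h1 : x / 2 + t ≤ y + t := by linarith [hy.1]
    rw [Real.norm_eq_abs, abs_mul, abs_neg, abs_of_pos hμ0,
      abs_of_nonneg (Real.rpow_nonneg hyt.le _)]
    refine mul_le_mul_of_nonneg_left ?_ hμ0.le
    exact Real.rpow_le_rpow_of_nonpos (by linarith) h1 (by linarith)
  · filter_upwards [st_ae_nonneg hsupp] with t ht y hy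
    rw [Metric.mem_ball, Real.dist_eq, abs_lt] at hy
    have hyt : 0 < y + t := by linarith [hy.1]
    have h1 : HasDerivAt (fun y : ℝ => y + t) 1 y := (hasDerivAt_id y).add_const t
    have h2 := h1.rpow_const (p := -μ) (Or.inl hyt.ne')
    have h3 : 1 * -μ * (y + t) ^ (-μ - 1) = -μ * (y + t) ^ (-(μ + 1)) := by
      rw [one_mul]
      congr 1
      ring
    rwa [h3] at h2

private noncomputable def Pprod (lam : ℝ) (m : ℕ) : ℝ := ∏ i ∈ Finset.range m, (lam + i)

private lemma st_gammaP (hlam : 0 < lam) (m : ℕ) :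
    Real.Gamma (lam + m) = Real.Gamma lam * Pprod lam m := by
  induction m with
  | zero => simp [Pprod]
  | succ m ih =>
    have h1 : lam + ((m + 1 : ℕ) : ℝ) = (lam + m) + 1 := by push_cast; ring
    have h2 : lam + (m : ℝ) ≠ 0 := by positivity
    rw [h1, Real.Gamma_add_one h2, ih]
    simp only [Pprod, Finset.prod_range_succ]
    ring

private lemma st_Ppos (hlam : 0 < lam) (m : ℕ) : 0 < Pprod lam m := by
  apply Finset.prod_pos
  intro i _
  positivity

private lemma st_iter (hlam : 0 < lam) (hsupp : ρ (Set.Iio 0) = 0)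
    (hint : ∀ x > (0:ℝ), Integrable (fun t => (x + t) ^ (-lam)) ρ)
    {f : ℝ → ℝ} {C : ℝ} (hf : ∀ x > (0:ℝ), f x = C + ∫ t, (x + t) ^ (-lam) ∂ρ) (m : ℕ) :
    ∀ x > (0:ℝ), iteratedDerivWithin m f (Set.Ioi 0) x
      = (if m = 0 then C else 0) + (-1:ℝ)^m * Pprod lam m * ∫ t, (x + t) ^ (-(lam + m)) ∂ρ := by
  induction m with
  | zero =>
    intro x hx
    simp only [iteratedDerivWithin_zero, Nat.cast_zero, add_zero, if_pos rfl, pow_zero]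
    rw [hf x hx, Pprod]
    simp
  | succ m ih =>
    intro x hx
    rw [iteratedDerivWithin_succ]
    have hder := st_deriv hlam hsupp hint
      (μ := lam + m) (le_add_of_nonneg_right (by positivity)) hx
    have hd : HasDerivAt
        (fun y => (if m = 0 then C else 0) +
          (-1:ℝ)^m * Pprod lam m * ∫ t, (y + t) ^ (-(lam + m)) ∂ρ)
        ((-1:ℝ)^m * Pprod lam m * (-(lam + m) * ∫ t, (x + t) ^ (-(lam + m + 1)) ∂ρ)) x :=
      (hder.const_mul _).const_add _
    have heq : iteratedDerivWithin m f (Set.Ioi 0) =ᶠ[nhds x]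
        (fun y => (if m = 0 then C else 0) +
          (-1:ℝ)^m * Pprod lam m * ∫ t, (y + t) ^ (-(lam + m)) ∂ρ) := by
      filter_upwards [isOpen_Ioi.mem_nhds hx] with y hy
      exact ih y hy
    have hd2 := hd.congr_of_eventuallyEq heq
    rw [hd2.hasDerivWithinAt.derivWithin ((uniqueDiffOn_Ioi 0) x hx)]
    have hexp : -(lam + (m : ℝ) + 1) = -(lam + ((m + 1 : ℕ) : ℝ)) := by push_cast; ring
    rw [hexp]
    simp only [Nat.succ_ne_zero, if_false, Pprod, Finset.prod_range_succ, pow_succ]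
    rw [← Pprod]
    ring

private lemma st_sumint (hlam : 0 < lam) (hsupp : ρ (Set.Iio 0) = 0)
    (hint : ∀ x > (0:ℝ), Integrable (fun t => (x + t) ^ (-lam)) ρ)
    (n k : ℕ) {x : ℝ} (hx : 0 < x) :
    ∑ j ∈ Finset.range (k + 1),
        (k.choose j : ℝ) * (-x) ^ j * ∫ t, (x + t) ^ (-(lam + ((n + j : ℕ) : ℝ))) ∂ρ
      = ∫ t, t ^ k / (x + t) ^ ((n : ℝ) + k + lam) ∂ρ := by
  have hI : ∀ j : ℕ, Integrable
      (fun t => ((k.choose j : ℝ) * (-x) ^ j) * (x + t) ^ (-(lam + ((n + j : ℕ) : ℝ)))) ρ :=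
    fun j => (st_int hlam hsupp hint (le_add_of_nonneg_right (by positivity)) hx).const_mul _
  calc ∑ j ∈ Finset.range (k + 1),
        (k.choose j : ℝ) * (-x) ^ j * ∫ t, (x + t) ^ (-(lam + ((n + j : ℕ) : ℝ))) ∂ρ
      = ∑ j ∈ Finset.range (k + 1),
          ∫ t, ((k.choose j : ℝ) * (-x) ^ j) * (x + t) ^ (-(lam + ((n + j : ℕ) : ℝ))) ∂ρ := by
        refine Finset.sum_congr rfl fun j _ => ?_
        rw [integral_const_mul]
    _ = ∫ t, ∑ j ∈ Finset.range (k + 1),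
          ((k.choose j : ℝ) * (-x) ^ j) * (x + t) ^ (-(lam + ((n + j : ℕ) : ℝ))) ∂ρ :=
        (integral_finset_sum _ fun j _ => hI j).symm
    _ = ∫ t, t ^ k / (x + t) ^ ((n : ℝ) + k + lam) ∂ρ := by
        refine integral_congr_ae ?_
        filter_upwards [st_ae_nonneg hsupp] with t ht
        have hu : 0 < x + t := by linarith
        have hptw : ∀ j ∈ Finset.range (k + 1),
            ((k.choose j : ℝ) * (-x) ^ j) * (x + t) ^ (-(lam + ((n + j : ℕ) : ℝ)))
            = ((-x) ^ j * (x + t) ^ (k - j) * (k.choose j : ℝ))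
                * (x + t) ^ (-((n : ℝ) + k + lam)) := by
          intro j hj
          have hjk : j ≤ k := Nat.lt_succ_iff.mp (Finset.mem_range.mp hj)
          have e1 : -(lam + ((n + j : ℕ) : ℝ)) = ((k - j : ℕ) : ℝ) + -((n : ℝ) + k + lam) := by
            rw [Nat.cast_sub hjk]
            push_cast
            ring
          rw [e1, Real.rpow_add hu, Real.rpow_natCast]
          ring
        rw [Finset.sum_congr rfl hptw, ← Finset.sum_mul, ← add_pow]
        have h2 : -x + (x + t) = t := by ring
        rw [h2, div_eq_mul_inv, ← Real.rpow_neg hu.le]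

end aux

/-- if `f(x) = C + ∫_{[0,∞)} (x+t)^{-λ} dρ(t)` with `C ≥ 0` and `ρ ≥ 0`
(integral finite for all `x > 0`), then for all `n, k ≥ 0` and `x > 0`,
`F^{[λ]}_{n,k}(x) = (Γ(n+k+λ)/Γ(λ)) [ C δ_{n,0} + ∫ t^k/(x+t)^{n+k+λ} dρ(t) ]`,
and in particular `F^{[λ]}_{n,k}(x) ≥ 0`. -/
theorem stmt19 (lam : ℝ) (hlam : 0 < lam) (f : ℝ → ℝ) (C : ℝ) (ρ : Measure ℝ)
    (hC : 0 ≤ C) (hsupp : ρ (Set.Iio 0) = 0)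
    (hint : ∀ x > (0 : ℝ), Integrable (fun t => (x + t) ^ (-lam)) ρ)
    (hf : ∀ x > (0 : ℝ), f x = C + ∫ t, (x + t) ^ (-lam) ∂ρ) :
    ∀ (n k : ℕ), ∀ x > (0 : ℝ),
      Fgen lam f n k x =
          Real.Gamma ((n : ℝ) + k + lam) / Real.Gamma lam *
            ((if n = 0 then C else 0) +
              ∫ t, t ^ k / (x + t) ^ ((n : ℝ) + k + lam) ∂ρ) ∧
        0 ≤ Fgen lam f n k x := by
  intro n k x hx
  have hΓL : (0:ℝ) < Real.Gamma lam := Real.Gamma_pos_of_pos hlam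
  have hG : ∀ j : ℕ, Real.Gamma ((n : ℝ) + j + lam) = Real.Gamma lam * Pprod lam (n + j) := by
    intro j
    rw [show (n : ℝ) + j + lam = lam + ((n + j : ℕ) : ℝ) by push_cast; ring]
    exact st_gammaP hlam (n + j)
  set D : ℝ := Real.Gamma ((n : ℝ) + k + lam) / Real.Gamma lam with hD
  have hDpos : 0 < D := by
    apply div_pos (Real.Gamma_pos_of_pos (by positivity)) hΓL
  have hit : ∀ m : ℕ, iteratedDerivWithin m f (Set.Ioi 0) x
      = (if m = 0 then C else 0) + (-1:ℝ)^m * Pprod lam m * ∫ t, (x + t) ^ (-(lam + m)) ∂ρ :=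
    fun m => st_iter hlam hsupp hint hf m x hx
  have heq : Fgen lam f n k x = D * ((if n = 0 then C else 0) +
      ∫ t, t ^ k / (x + t) ^ ((n : ℝ) + k + lam) ∂ρ) := by
    unfold Fgen
    simp only [hit]
    have hterm : ∀ j ∈ Finset.range (k + 1),
        (k.choose j : ℝ) * (Real.Gamma ((n : ℝ) + k + lam) / Real.Gamma ((n : ℝ) + j + lam)) *
          x ^ j *
          ((if n + j = 0 then C else 0) +
            (-1:ℝ)^(n+j) * Pprod lam (n+j) * ∫ t, (x + t) ^ (-(lam + ((n + j : ℕ) : ℝ))) ∂ρ)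
        = (if n = 0 ∧ j = 0 then D * C else 0)
          + (-1:ℝ)^(n+j) *
            (D * ((k.choose j : ℝ) * x ^ j *
              ∫ t, (x + t) ^ (-(lam + ((n + j : ℕ) : ℝ))) ∂ρ)) := by
      intro j hj
      have hP : 0 < Pprod lam (n + j) := st_Ppos hlam (n + j)
      rw [hG j, mul_add]
      congr 1
      · by_cases h0 : n = 0 ∧ j = 0
        · obtain ⟨h1, h2⟩ := h0
          subst h1; subst h2
          rw [hD]
          simp [Pprod]
        · have hnj : n + j ≠ 0 := fun h =>
            h0 ⟨Nat.eq_zero_of_add_eq_zero_right h, Nat.eq_zero_of_add_eq_zero_left h⟩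
          rw [if_neg hnj, if_neg h0, mul_zero]
      · rw [hD]
        field_simp
    rw [Finset.sum_congr rfl hterm, Finset.sum_add_distrib]
    have hs1 : ∑ j ∈ Finset.range (k + 1), (if n = 0 ∧ j = 0 then D * C else 0)
        = if n = 0 then D * C else 0 := by
      rw [Finset.sum_eq_single 0]
      · simp
      · intro b _ hb
        simp [hb]
      · intro h
        exact absurd (Finset.mem_range.mpr (Nat.succ_pos k)) h
    have hs2 : ∑ j ∈ Finset.range (k + 1),
        (-1:ℝ)^(n+j) * (D * ((k.choose j : ℝ) * x ^ j *
          ∫ t, (x + t) ^ (-(lam + ((n + j : ℕ) : ℝ))) ∂ρ))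
        = (-1:ℝ)^n * (D * ∑ j ∈ Finset.range (k + 1),
            (k.choose j : ℝ) * (-x) ^ j * ∫ t, (x + t) ^ (-(lam + ((n + j : ℕ) : ℝ))) ∂ρ) := by
      rw [Finset.mul_sum, Finset.mul_sum]
      refine Finset.sum_congr rfl fun j _ => ?_
      rw [pow_add, neg_pow x j]
      ring
    rw [hs1, hs2, st_sumint hlam hsupp hint n k hx]
    have h11 : ((-1:ℝ)^n) * ((-1:ℝ)^n) = 1 := by
      rw [← mul_pow]
      norm_num
    by_cases hn : n = 0
    · subst hn
      simp
      ring
    · rw [if_neg hn, if_neg hn, zero_add, zero_add, ← mul_assoc, h11, one_mul]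
  refine ⟨heq, ?_⟩
  rw [heq]
  have hI : 0 ≤ ∫ t, t ^ k / (x + t) ^ ((n : ℝ) + k + lam) ∂ρ := by
    apply integral_nonneg_of_ae
    filter_upwards [st_ae_nonneg hsupp] with t ht
    exact div_nonneg (pow_nonneg ht k) (Real.rpow_nonneg (by linarith) _)
  have hd : 0 ≤ (if n = 0 then C else 0) := by
    split <;> simp [hC]
  positivity
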